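/- arXiv:1303.1401 — 4 statements merged into one kernel-verified Lean document; each statement's English description precedes it below -/
import Mathlib

section
/- Let H be a real Hilbert space and let F : ℝ → (H →L[ℝ] H) be a family of bounded symmetric operators which is differentiable at s₀ with derivative F'. Let λ : ℝ → ℝ and x : ℝ → H be differentiable at s₀ and suppose that F(s) x(s) = λ(s) • x(s) for all s in a neighborhood of s₀ and that ‖x(s₀)‖ = 1. Then the derivative of λ at s₀ equals ⟪F'(x(s₀)), x(s₀)⟫, i.e. λ'(s₀) = ⟨F'(s₀) x(s₀), x(s₀)⟩. -/
open scoped RealInnerProductSpace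

/-- Variation of eigenvalues along a differentiable path of bounded symmetric
operators on a real Hilbert space: if `F s (x s) = λ s • x s` near `s₀` and
`‖x s₀‖ = 1`, then `λ'(s₀) = ⟪F'(s₀) (x s₀), x s₀⟫`. -/
theorem eigenvalue_variation
    {H : Type*} [NormedAddCommGroup H] [InnerProductSpace ℝ H] [CompleteSpace H]
    (F : ℝ → (H →L[ℝ] H)) (F' : H →L[ℝ] H) (s₀ : ℝ)
    (hFsymm : ∀ s : ℝ, ∀ u v : H, ⟪F s u, v⟫ = ⟪u, F s v⟫)
    (hF : HasDerivAt F F' s₀)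
    (lam : ℝ → ℝ) (lam' : ℝ) (hlam : HasDerivAt lam lam' s₀)
    (x : ℝ → H) (x' : H) (hx : HasDerivAt x x' s₀)
    (heig : ∀ᶠ s in nhds s₀, F s (x s) = lam s • x s)
    (hnorm : ‖x s₀‖ = 1) :
    lam' = ⟪F' (x s₀), x s₀⟫ := by
  have h0 : F s₀ (x s₀) = lam s₀ • x s₀ := heig.self_of_nhds
  -- derivative of s ↦ F s (x s)
  have hFx : HasDerivAt (fun s => F s (x s)) (F' (x s₀) + F s₀ x') s₀ :=
    hF.clm_apply hx
  -- g s = ⟪F s (x s), x s⟫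
  have hg : HasDerivAt (fun s => ⟪F s (x s), x s⟫)
      (⟪F s₀ (x s₀), x'⟫ + ⟪F' (x s₀) + F s₀ x', x s₀⟫) s₀ := hFx.inner ℝ hx
  -- h s = lam s * ⟪x s, x s⟫
  have hinner : HasDerivAt (fun s => ⟪x s, x s⟫) (⟪x s₀, x'⟫ + ⟪x', x s₀⟫) s₀ :=
    hx.inner ℝ hx
  have hh : HasDerivAt (fun s => lam s * ⟪x s, x s⟫)
      (lam' * ⟪x s₀, x s₀⟫ + lam s₀ * (⟪x s₀, x'⟫ + ⟪x', x s₀⟫)) s₀ :=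
    hlam.mul hinner
  have heq : (fun s => ⟪F s (x s), x s⟫) =ᶠ[nhds s₀] fun s => lam s * ⟪x s, x s⟫ := by
    filter_upwards [heig] with s hs
    rw [hs, real_inner_smul_left]
  have huniq : ⟪F s₀ (x s₀), x'⟫ + ⟪F' (x s₀) + F s₀ x', x s₀⟫
      = lam' * ⟪x s₀, x s₀⟫ + lam s₀ * (⟪x s₀, x'⟫ + ⟪x', x s₀⟫) :=
    hg.unique (hh.congr_of_eventuallyEq heq)
  have hxx : ⟪x s₀, x s₀⟫ = (1 : ℝ) := by
    rw [real_inner_self_eq_norm_sq, hnorm]; norm_num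
  have h1 : ⟪F s₀ (x s₀), x'⟫ = lam s₀ * ⟪x s₀, x'⟫ := by
    rw [h0, real_inner_smul_left]
  have h2 : ⟪F s₀ x', x s₀⟫ = lam s₀ * ⟪x', x s₀⟫ := by
    rw [hFsymm, h0, real_inner_smul_right]
  rw [inner_add_left, h1, h2, hxx] at huniq
  linarith
end

section
/- Let δ > 0 and a ∈ ℝ. Let f : ℝ → ℝ be twice differentiable on [a,∞), nonnegative on [a,∞), bounded above on [a,∞), and satisfy the differential inequality f''(s) ≥ δ² f(s) for all s ≥ a. Then f decays exponentially: for every s ≥ a one has f(s) ≤ f(a) · exp(−δ (s − a)). -/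
private lemma mono_aux (c : ℝ) (u u' : ℝ → ℝ)
    (hu : ∀ s, c ≤ s → HasDerivAt u (u' s) s)
    (h0 : ∀ s, c ≤ s → 0 ≤ u' s) :
    MonotoneOn u (Set.Ici c) := by
  apply monotoneOn_of_deriv_nonneg (convex_Ici c)
  · exact fun s hs => (hu s hs).continuousAt.continuousWithinAt
  · intro s hs
    rw [interior_Ici] at hs
    exact (hu s (le_of_lt hs)).differentiableAt.differentiableWithinAt
  · intro s hs
    rw [interior_Ici] at hs
    rw [(hu s (le_of_lt hs)).deriv]
    exact h0 s (le_of_lt hs)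

/-- Exponential decay: if `f` is twice differentiable on `[a,∞)`, nonnegative and
bounded above there, and satisfies `f'' ≥ δ² f`, then
`f s ≤ f a * exp (-δ (s - a))` for all `s ≥ a`. -/
theorem exp_decay_of_diff_ineq
    (δ a : ℝ) (hδ : 0 < δ) (f f' f'' : ℝ → ℝ)
    (hf' : ∀ s, a ≤ s → HasDerivAt f (f' s) s)
    (hf'' : ∀ s, a ≤ s → HasDerivAt f' (f'' s) s)
    (hnonneg : ∀ s, a ≤ s → 0 ≤ f s)
    (hbdd : ∃ M : ℝ, ∀ s, a ≤ s → f s ≤ M)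
    (hineq : ∀ s, a ≤ s → δ ^ 2 * f s ≤ f'' s) :
    ∀ s, a ≤ s → f s ≤ f a * Real.exp (-δ * (s - a)) := by
  obtain ⟨M, hM⟩ := hbdd
  set g : ℝ → ℝ := fun s => f' s + δ * f s with hgdef
  have hg' : ∀ s, a ≤ s → HasDerivAt g (f'' s + δ * f' s) s := by
    intro s hs
    exact (hf'' s hs).add ((hf' s hs).const_mul δ)
  -- Key claim: g ≤ 0 on [a, ∞)
  have key : ∀ s, a ≤ s → g s ≤ 0 := by
    by_contra hcon
    push_neg at hcon
    obtain ⟨s₀, hs₀a, hg₀⟩ := hcon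
    -- G s = g s * exp(-δ(s - s₀)) is monotone on [a,∞)
    have hE : ∀ s : ℝ, HasDerivAt (fun t => Real.exp (-δ * (t - s₀)))
        (Real.exp (-δ * (s - s₀)) * (-δ)) s := by
      intro s
      have h1 : HasDerivAt (fun t : ℝ => -δ * (t - s₀)) (-δ * 1) s :=
        ((hasDerivAt_id s).sub_const s₀).const_mul (-δ)
      simpa using h1.exp
    have hGmono : MonotoneOn (fun s => g s * Real.exp (-δ * (s - s₀))) (Set.Ici a) := by
      apply mono_aux a _ (fun s => (f'' s + δ * f' s) * Real.exp (-δ * (s - s₀)) +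
        g s * (Real.exp (-δ * (s - s₀)) * (-δ)))
      · intro s hs
        exact (hg' s hs).mul (hE s)
      · intro s hs
        have h1 := hineq s hs
        have h2 := Real.exp_pos (-δ * (s - s₀))
        simp only [hgdef]
        nlinarith [h2.le]
    have hGlb : ∀ s, s₀ ≤ s → g s₀ ≤ g s * Real.exp (-δ * (s - s₀)) := by
      intro s hs
      have := hGmono (Set.mem_Ici.2 hs₀a) (Set.mem_Ici.2 (hs₀a.trans hs)) hs
      simpa using this
    -- H s = f s * exp(δ(s-s₀)) - (g s₀/(2δ)) * exp(2δ(s-s₀)) monotone on [s₀,∞)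
    set C : ℝ := g s₀ / (2 * δ) with hC
    have hCpos : 0 < C := div_pos hg₀ (by linarith)
    have hE2 : ∀ s : ℝ, HasDerivAt (fun t => Real.exp (δ * (t - s₀)))
        (Real.exp (δ * (s - s₀)) * δ) s := by
      intro s
      have h1 : HasDerivAt (fun t : ℝ => δ * (t - s₀)) (δ * 1) s :=
        ((hasDerivAt_id s).sub_const s₀).const_mul δ
      simpa using h1.exp
    have hE3 : ∀ s : ℝ, HasDerivAt (fun t => Real.exp (2 * δ * (t - s₀)))
        (Real.exp (2 * δ * (s - s₀)) * (2 * δ)) s := by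
      intro s
      have h1 : HasDerivAt (fun t : ℝ => 2 * δ * (t - s₀)) (2 * δ * 1) s :=
        ((hasDerivAt_id s).sub_const s₀).const_mul (2 * δ)
      simpa using h1.exp
    have hHmono : MonotoneOn
        (fun s => f s * Real.exp (δ * (s - s₀)) - C * Real.exp (2 * δ * (s - s₀)))
        (Set.Ici s₀) := by
      apply mono_aux s₀ _ (fun s => (f' s * Real.exp (δ * (s - s₀)) +
          f s * (Real.exp (δ * (s - s₀)) * δ)) - C * (Real.exp (2 * δ * (s - s₀)) * (2 * δ)))
      · intro s hs
        exact ((hf' s (hs₀a.trans hs)).mul (hE2 s)).sub ((hE3 s).const_mul C)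
      · intro s hs
        have h1 := hGlb s hs
        have e1 : Real.exp (δ * (s - s₀)) * Real.exp (δ * (s - s₀)) =
            Real.exp (2 * δ * (s - s₀)) := by
          rw [← Real.exp_add]; ring_nf
        have e2 : Real.exp (-δ * (s - s₀)) * Real.exp (δ * (s - s₀)) = 1 := by
          rw [← Real.exp_add]
          norm_num
        have hp1 := Real.exp_pos (δ * (s - s₀))
        have hp2 := Real.exp_pos (-δ * (s - s₀))
        -- from h1 : g s₀ ≤ g s * exp(-δ(s-s₀)), multiply by exp(δ(s-s₀)):
        have h2 : g s₀ * Real.exp (δ * (s - s₀)) ≤ g s := by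
          have := mul_le_mul_of_nonneg_right h1 hp1.le
          calc g s₀ * Real.exp (δ * (s - s₀))
              ≤ g s * Real.exp (-δ * (s - s₀)) * Real.exp (δ * (s - s₀)) := this
            _ = g s * (Real.exp (-δ * (s - s₀)) * Real.exp (δ * (s - s₀))) := by ring
            _ = g s := by rw [e2]; ring
        have hCval : C * (2 * δ) = g s₀ := by
          rw [hC, div_mul_cancel₀ _ (by positivity : (2 * δ : ℝ) ≠ 0)]
        simp only [hgdef] at h2 hCval ⊢
        have h3 := mul_le_mul_of_nonneg_right h2 hp1.le
        have h4 : C * (Real.exp (2 * δ * (s - s₀)) * (2 * δ)) =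
            (f' s₀ + δ * f s₀) * (Real.exp (δ * (s - s₀)) * Real.exp (δ * (s - s₀))) := by
          rw [← e1] at *
          calc C * (Real.exp (δ * (s - s₀)) * Real.exp (δ * (s - s₀)) * (2 * δ))
              = C * (2 * δ) * (Real.exp (δ * (s - s₀)) * Real.exp (δ * (s - s₀))) := by ring
            _ = (f' s₀ + δ * f s₀) * (Real.exp (δ * (s - s₀)) * Real.exp (δ * (s - s₀))) := by
                rw [hCval]
        nlinarith [h3, h4]
    -- Derive lower growth bound and contradiction
    have hfa := hnonneg a le_rfl
    have hMnn : (0:ℝ) ≤ M := le_trans hfa (hM a le_rfl)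
    set T : ℝ := 2 * (M + 1) / g s₀ with hT
    have hTpos : 0 < T := div_pos (by linarith) hg₀
    set s := s₀ + T with hsdef
    have hss₀ : s₀ ≤ s := by simp [hsdef]; linarith
    have hsa : a ≤ s := hs₀a.trans hss₀
    have hH := hHmono (Set.mem_Ici.2 le_rfl) (Set.mem_Ici.2 hss₀) hss₀
    simp only [sub_self, mul_zero, Real.exp_zero, mul_one] at hH
    -- hH : f s₀ - C ≤ f s * exp(δ(s-s₀)) - C * exp(2δ(s-s₀))
    set u : ℝ := δ * (s - s₀) with hu
    have hupos : 0 < u := by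
      have : s - s₀ = T := by simp [hsdef]
      rw [hu, this]; positivity
    have e1 : Real.exp (2 * δ * (s - s₀)) = Real.exp u * Real.exp u := by
      rw [← Real.exp_add, hu]; ring_nf
    have hk : u + 1 ≤ Real.exp u := Real.add_one_le_exp u
    have hkpos := Real.exp_pos u
    have hfs₀ := hnonneg s₀ hs₀a
    -- f s * exp u ≥ C * (exp u * exp u - 1) ≥ C * u * exp u
    have hq : 0 ≤ C * (Real.exp u * Real.exp u - 1 - u * Real.exp u) := by
      apply mul_nonneg hCpos.le
      have h5 : (1:ℝ) ≤ Real.exp u - u := by linarith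
      have h7 : Real.exp u * 1 ≤ Real.exp u * (Real.exp u - u) :=
        mul_le_mul_of_nonneg_left h5 hkpos.le
      nlinarith
    have h3 : C * u * Real.exp u ≤ f s * Real.exp u := by
      rw [e1] at hH
      nlinarith [hq, hfs₀, hH]
    have h4 : C * u ≤ f s := le_of_mul_le_mul_right (by linarith) hkpos
    have hCu : C * u = M + 1 := by
      have : s - s₀ = T := by simp [hsdef]
      rw [hu, this, hC, hT]
      field_simp
    have := hM s hsa
    rw [hCu] at h4
    linarith
  -- Now F s = f s * exp(δ(s-a)) is antitone on [a,∞)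
  have hE2 : ∀ s : ℝ, HasDerivAt (fun t => Real.exp (δ * (t - a)))
      (Real.exp (δ * (s - a)) * δ) s := by
    intro s
    have h1 : HasDerivAt (fun t : ℝ => δ * (t - a)) (δ * 1) s :=
      ((hasDerivAt_id s).sub_const a).const_mul δ
    simpa using h1.exp
  have hFanti : MonotoneOn (fun s => -(f s * Real.exp (δ * (s - a)))) (Set.Ici a) := by
    apply mono_aux a _ (fun s => -(f' s * Real.exp (δ * (s - a)) +
        f s * (Real.exp (δ * (s - a)) * δ)))
    · intro s hs
      exact ((hf' s hs).mul (hE2 s)).neg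
    · intro s hs
      have h1 := key s hs
      have h2 := Real.exp_pos (δ * (s - a))
      simp only [hgdef] at h1
      nlinarith [h2.le]
  intro s hs
  have hF := hFanti (Set.mem_Ici.2 le_rfl) (Set.mem_Ici.2 hs) hs
  simp only [sub_self, mul_zero, Real.exp_zero, mul_one, neg_le_neg_iff] at hF
  -- hF : f s * exp(δ(s-a)) ≤ f a
  have e2 : Real.exp (-δ * (s - a)) * Real.exp (δ * (s - a)) = 1 := by
    rw [← Real.exp_add]; norm_num
  have hp := Real.exp_pos (-δ * (s - a))
  calc f s = f s * (Real.exp (-δ * (s - a)) * Real.exp (δ * (s - a))) := by rw [e2]; ring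
    _ = (f s * Real.exp (δ * (s - a))) * Real.exp (-δ * (s - a)) := by ring
    _ ≤ f a * Real.exp (-δ * (s - a)) := mul_le_mul_of_nonneg_right hF hp.le
end

section
/- Let δ > 0 and a ∈ ℝ. Let f : ℝ → ℝ be twice differentiable on [a,∞), nonnegative on [a,∞), bounded above on [a,∞), and satisfy f''(s) ≥ δ² f(s) for all s ≥ a. Then f'(s) + δ f(s) ≤ 0 for every s ≥ a. -/
/-- If `f` is twice differentiable on `[a,∞)`, nonnegative and bounded above there,
and satisfies `f'' ≥ δ² f`, then `f' s + δ f s ≤ 0` for every `s ≥ a`. -/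
theorem deriv_plus_delta_nonpos
    (δ a : ℝ) (hδ : 0 < δ) (f f' f'' : ℝ → ℝ)
    (hf' : ∀ s, a ≤ s → HasDerivAt f (f' s) s)
    (hf'' : ∀ s, a ≤ s → HasDerivAt f' (f'' s) s)
    (hnonneg : ∀ s, a ≤ s → 0 ≤ f s)
    (hbdd : ∃ M : ℝ, ∀ s, a ≤ s → f s ≤ M)
    (hineq : ∀ s, a ≤ s → δ ^ 2 * f s ≤ f'' s) :
    ∀ s, a ≤ s → f' s + δ * f s ≤ 0 := by
  obtain ⟨M, hM⟩ := hbdd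
  intro s₀ hs₀
  by_contra hpos
  push_neg at hpos
  set c := f' s₀ + δ * f s₀ with hc
  have hc0 : 0 < c := hpos
  have hM0 : 0 ≤ M := le_trans (hnonneg s₀ hs₀) (hM s₀ hs₀)
  set F := fun s => Real.exp (-δ * s) * (f' s + δ * f s) with hF
  have hFderiv : ∀ s, a ≤ s → HasDerivAt F
      (Real.exp (-δ * s) * (f'' s - δ ^ 2 * f s)) s := by
    intro s hs
    have h1 : HasDerivAt (fun s => Real.exp (-δ * s)) (-δ * Real.exp (-δ * s)) s := by
      simpa [mul_comm] using ((hasDerivAt_id s).const_mul (-δ)).exp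
    have h2 : HasDerivAt (fun s => f' s + δ * f s) (f'' s + δ * f' s) s :=
      (hf'' s hs).add ((hf' s hs).const_mul δ)
    have := h1.mul h2
    exact this.congr_deriv (by ring)
  have hFmono : MonotoneOn F (Set.Ici a) := by
    apply monotoneOn_of_deriv_nonneg (convex_Ici a)
    · intro x hx
      exact ((hFderiv x hx).continuousAt).continuousWithinAt
    · intro x hx
      rw [interior_Ici] at hx
      exact (hFderiv x hx.le).differentiableAt.differentiableWithinAt
    · intro x hx
      rw [interior_Ici] at hx
      rw [(hFderiv x hx.le).deriv]
      exact mul_nonneg (Real.exp_pos _).le (by linarith [hineq x hx.le])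
  have key : ∀ s, s₀ ≤ s → c * Real.exp (δ * (s - s₀)) ≤ f' s + δ * f s := by
    intro s hs
    have hsa : a ≤ s := le_trans hs₀ hs
    have h := hFmono (Set.mem_Ici.2 hs₀) (Set.mem_Ici.2 hsa) hs
    have h2 := mul_le_mul_of_nonneg_left h (Real.exp_pos (δ * s)).le
    simp only [hF] at h2
    rw [← mul_assoc, ← mul_assoc, ← Real.exp_add, ← Real.exp_add] at h2
    have e1 : δ * s + -δ * s = 0 := by ring
    have e2 : δ * s + -δ * s₀ = δ * (s - s₀) := by ring
    rw [e1, e2, Real.exp_zero, one_mul] at h2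
    calc c * Real.exp (δ * (s - s₀)) = Real.exp (δ * (s - s₀)) * c := by ring
    _ ≤ f' s + δ * f s := h2
  -- choose s₁ past which f' ≥ 1
  obtain ⟨s₁, hs₁⟩ : ∃ y : ℝ, y = s₀ + max 0 ((1 / δ) * Real.log ((δ * M + 1) / c)) := ⟨_, rfl⟩
  have hs₁ge : s₀ ≤ s₁ := by
    have := le_max_left 0 ((1 / δ) * Real.log ((δ * M + 1) / c))
    linarith
  have hs₁a : a ≤ s₁ := le_trans hs₀ hs₁ge
  have hratio : 0 < (δ * M + 1) / c := by positivity
  have hgrow : ∀ s, s₁ ≤ s → δ * M + 1 ≤ f' s + δ * f s := by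
    intro s hs
    have h1 : Real.log ((δ * M + 1) / c) ≤ δ * (s - s₀) := by
      have h2 : (1 / δ) * Real.log ((δ * M + 1) / c) ≤ s - s₀ := by
        have h0 := le_max_right 0 ((1 / δ) * Real.log ((δ * M + 1) / c))
        linarith
      calc Real.log ((δ * M + 1) / c) = δ * ((1 / δ) * Real.log ((δ * M + 1) / c)) := by
            field_simp
      _ ≤ δ * (s - s₀) := by nlinarith
    have h3 : (δ * M + 1) / c ≤ Real.exp (δ * (s - s₀)) := by
      calc (δ * M + 1) / c = Real.exp (Real.log ((δ * M + 1) / c)) :=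
            (Real.exp_log hratio).symm
      _ ≤ Real.exp (δ * (s - s₀)) := Real.exp_le_exp.2 h1
    have h4 : δ * M + 1 ≤ c * Real.exp (δ * (s - s₀)) := by
      have := mul_le_mul_of_nonneg_left h3 hc0.le
      calc δ * M + 1 = c * ((δ * M + 1) / c) := by field_simp
      _ ≤ c * Real.exp (δ * (s - s₀)) := this
    exact le_trans h4 (key s (le_trans hs₁ge hs))
  have hf'1 : ∀ s, s₁ ≤ s → (1 : ℝ) ≤ f' s := by
    intro s hs
    have hsa : a ≤ s := le_trans hs₁a hs
    have := hgrow s hs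
    have := hM s hsa
    nlinarith
  -- f - id monotone on Ici s₁
  have hg : ∀ x, s₁ ≤ x → HasDerivAt (fun s => f s - s) (f' x - 1) x := by
    intro x hx
    exact (hf' x (le_trans hs₁a hx)).sub (hasDerivAt_id' x)
  have hgmono : MonotoneOn (fun s => f s - s) (Set.Ici s₁) := by
    apply monotoneOn_of_deriv_nonneg (convex_Ici s₁)
    · intro x hx
      exact ((hg x hx).continuousAt).continuousWithinAt
    · intro x hx
      rw [interior_Ici] at hx
      exact (hg x hx.le).differentiableAt.differentiableWithinAt
    · intro x hx
      rw [interior_Ici] at hx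
      rw [(hg x hx.le).deriv]
      have := hf'1 x hx.le
      linarith
  obtain ⟨s₂, hs₂⟩ : ∃ y : ℝ, y = s₁ + (M + 1 - f s₁) := ⟨_, rfl⟩
  have hf₁M : f s₁ ≤ M := hM s₁ hs₁a
  have hs₂ge : s₁ ≤ s₂ := by linarith
  have := hgmono (Set.mem_Ici.2 le_rfl) (Set.mem_Ici.2 hs₂ge) hs₂ge
  have hfs₂ : f s₂ ≤ M := hM s₂ (le_trans hs₁a hs₂ge)
  simp only at this
  nlinarith
end

section
/- Let δ ∈ ℝ, a ∈ ℝ, and let f : ℝ → ℝ be twice differentiable on [a,∞) with f''(s) ≥ δ² f(s) for all s ≥ a. Then the function g : s ↦ exp(−δ s) · (f'(s) + δ f(s)) is monotone nondecreasing on [a,∞). -/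
/-- If `f` is twice differentiable on `[a,∞)` with `f'' ≥ δ² f` there, then
`s ↦ exp (-δ s) * (f' s + δ f s)` is monotone nondecreasing on `[a,∞)`. -/
theorem monotoneOn_exp_mul_deriv_add
    (δ a : ℝ) (f f' f'' : ℝ → ℝ)
    (hf' : ∀ s, a ≤ s → HasDerivAt f (f' s) s)
    (hf'' : ∀ s, a ≤ s → HasDerivAt f' (f'' s) s)
    (hineq : ∀ s, a ≤ s → δ ^ 2 * f s ≤ f'' s) :
    MonotoneOn (fun s => Real.exp (-δ * s) * (f' s + δ * f s)) (Set.Ici a) := by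
  have hg : ∀ s, a ≤ s →
      HasDerivAt (fun s => Real.exp (-δ * s) * (f' s + δ * f s))
        (Real.exp (-δ * s) * (f'' s - δ ^ 2 * f s)) s := by
    intro s hs
    have he : HasDerivAt (fun s => Real.exp (-δ * s)) (-δ * Real.exp (-δ * s)) s := by
      simpa [mul_comm] using ((hasDerivAt_id s).const_mul (-δ)).exp
    have hin : HasDerivAt (fun s => f' s + δ * f s) (f'' s + δ * f' s) s :=
      (hf'' s hs).add ((hf' s hs).const_mul δ)
    have : HasDerivAt (fun s => Real.exp (-δ * s) * (f' s + δ * f s))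
        (-δ * Real.exp (-δ * s) * (f' s + δ * f s) + Real.exp (-δ * s) * (f'' s + δ * f' s)) s :=
      he.mul hin
    convert this using 1
    ring
  apply monotoneOn_of_deriv_nonneg (convex_Ici a)
  · exact fun s hs => ((hg s hs).continuousAt).continuousWithinAt
  · intro s hs
    rw [interior_Ici] at hs
    exact (hg s hs.le).differentiableAt.differentiableWithinAt
  · intro s hs
    rw [interior_Ici] at hs
    rw [(hg s hs.le).deriv]
    have := hineq s hs.le
    exact mul_nonneg (Real.exp_nonneg _) (by linarith)
end
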